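/- arXiv:1102.2866 — 3 statements merged into one kernel-verified Lean document; each statement's English description precedes it below -/
import Mathlib

section
/- The relation ≤ defined on subgroups of a free group F equipped with compatible peripheral structures—where (H,[u]) ≤ (K,[v]) iff (1) the index of H ∩ K in H is finite, and (2) if additionally the index of H ∩ K in K is finite then the peripheral structure induced on H ∩ K by [u] is compatible with [v]—is a preorder (reflexive and transitive). -/
/-- The conjugate `g C g⁻¹` of a subgroup `C`. -/
def conjSub {G : Type*} [Group G] (g : G) (C : Subgroup G) : Subgroup G :=
  C.map (MulAut.conj g).toMonoidHom

/-- `C` is a maximal cyclic subgroup of the subgroup `H`: `C ≤ H` is cyclic and not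
properly contained in any cyclic subgroup of `H`. -/
def IsMaxCyclicIn {G : Type*} [Group G] (H C : Subgroup G) : Prop :=
  C ≤ H ∧ (∃ x : G, C = Subgroup.zpowers x) ∧
    ∀ C' : Subgroup G, C' ≤ H → (∃ x : G, C' = Subgroup.zpowers x) → C ≤ C' → C = C'

/-- A peripheral structure on a subgroup `H`: a set of pairwise non-conjugate (in `H`)
maximal cyclic subgroups of `H`. -/
def IsPeripheralStructure {G : Type*} [Group G] (H : Subgroup G) (P : Set (Subgroup G)) :
    Prop :=
  (∀ C ∈ P, IsMaxCyclicIn H C) ∧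
    ∀ C ∈ P, ∀ C' ∈ P, (∃ h ∈ H, conjSub h C = C') → C = C'

/-- The pullback to a subgroup `H ≤ K` of a peripheral structure `P` on `K`: the
(closure under `H`-conjugacy of the) set of nontrivial subgroups `H ∩ gCg⁻¹` for
`C ∈ P`, `g ∈ K`. -/
def pullbackStruct {G : Type*} [Group G] (K : Subgroup G) (P : Set (Subgroup G))
    (H : Subgroup G) : Set (Subgroup G) :=
  {D | D ≠ ⊥ ∧ ∃ C ∈ P, ∃ g ∈ K, D = H ⊓ conjSub g C}

/-- A pair `(H, [u])`: a subgroup `H` of `F` together with a peripheral structure on `H`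
compatible with the fixed peripheral structure `W` on `F` (i.e. contained in the pullback
of `W` to `H`). -/
structure PPair (G : Type*) [Group G] (W : Set (Subgroup G)) where
  H : Subgroup G
  U : Set (Subgroup G)
  periph : IsPeripheralStructure H U
  compat : U ⊆ pullbackStruct ⊤ W H

/-- `(H,[u]) ≤ (K,[v])` iff `|H : H ∩ K| < ∞`, and whenever also `|K : H ∩ K| < ∞`,
the peripheral structure induced on `H ∩ K` by `[u]` is compatible with `[v]`
(i.e. the pullback of `[u]` to `H ∩ K` is contained in the pullback of `[v]`). -/
def ple {G : Type*} [Group G] {W : Set (Subgroup G)} (P Q : PPair G W) : Prop :=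
  Q.H.relIndex P.H ≠ 0 ∧
    (P.H.relIndex Q.H ≠ 0 →
      pullbackStruct P.H P.U (P.H ⊓ Q.H) ⊆ pullbackStruct Q.H Q.U (P.H ⊓ Q.H))

section ConjSubLemmas

variable {G : Type*} [Group G]

lemma mem_conjSub {g x : G} {C : Subgroup G} : x ∈ conjSub g C ↔ ∃ y ∈ C, g * y * g⁻¹ = x := by
  simp [conjSub, Subgroup.mem_map]

lemma conjSub_conjSub (g h : G) (C : Subgroup G) :
    conjSub g (conjSub h C) = conjSub (g * h) C := by
  unfold conjSub
  rw [Subgroup.map_map]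
  congr 1
  ext x
  simp [mul_assoc]

lemma conjSub_one (C : Subgroup G) : conjSub 1 C = C := by
  ext x; simp [mem_conjSub]

lemma conjSub_inv_conjSub (g : G) (C : Subgroup G) : conjSub g⁻¹ (conjSub g C) = C := by
  rw [conjSub_conjSub, inv_mul_cancel, conjSub_one]

lemma conjSub_mono {g : G} {C C' : Subgroup G} (h : C ≤ C') : conjSub g C ≤ conjSub g C' :=
  Subgroup.map_mono h

lemma conjSub_inf (g : G) (A B : Subgroup G) :
    conjSub g (A ⊓ B) = conjSub g A ⊓ conjSub g B :=
  Subgroup.map_inf A B _ (MulAut.conj g).injective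

lemma conjSub_zpowers (g x : G) :
    conjSub g (Subgroup.zpowers x) = Subgroup.zpowers (g * x * g⁻¹) := by
  unfold conjSub
  rw [MonoidHom.map_zpowers]
  rfl

lemma conjSub_self {g : G} {H : Subgroup G} (hg : g ∈ H) : conjSub g H = H := by
  ext x
  rw [mem_conjSub]
  constructor
  · rintro ⟨y, hy, rfl⟩
    exact mul_mem (mul_mem hg hy) (inv_mem hg)
  · intro hx
    exact ⟨g⁻¹ * x * g, mul_mem (mul_mem (inv_mem hg) hx) hg, by group⟩

lemma conjSub_maxCyclic {C : Subgroup G} {g : G} (h : IsMaxCyclicIn ⊤ C) :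
    IsMaxCyclicIn ⊤ (conjSub g C) := by
  obtain ⟨-, ⟨x, rfl⟩, hmax⟩ := h
  refine ⟨le_top, ⟨g * x * g⁻¹, conjSub_zpowers g x⟩, ?_⟩
  intro C' _ hcyc hle
  have hle' : Subgroup.zpowers x ≤ conjSub g⁻¹ C' := by
    have h' := conjSub_mono (g := g⁻¹) hle
    rwa [conjSub_inv_conjSub] at h'
  obtain ⟨w, hw⟩ := hcyc
  have hcyc' : ∃ w', conjSub g⁻¹ C' = Subgroup.zpowers w' :=
    ⟨g⁻¹ * w * g, by rw [hw, conjSub_zpowers]; group⟩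
  have heq := hmax _ le_top hcyc' hle'
  calc conjSub g (Subgroup.zpowers x) = conjSub g (conjSub g⁻¹ C') := by rw [heq]
  _ = C' := by rw [conjSub_conjSub, mul_inv_cancel, conjSub_one]

end ConjSubLemmas

section FreeGroupLemmas

lemma vanish {S : Type*} {A B : FreeGroup S} (hgen : Subgroup.closure {A, B} = ⊤)
    {H : Type*} [Group H] (ψ : FreeGroup S →* H) (hA : ψ A = 1) (hB : ψ B = 1) :
    ∀ x, ψ x = 1 := by
  intro x
  have hx : x ∈ Subgroup.closure {A, B} := by rw [hgen]; trivial
  have hle : Subgroup.closure {A, B} ≤ ψ.ker := by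
    rw [Subgroup.closure_le]
    rintro y (rfl | rfl) <;> simpa [MonoidHom.mem_ker]
  exact hle hx

set_option maxHeartbeats 1000000 in
lemma gens_subsingleton {S : Type*} {A B : FreeGroup S} {p q : ℤ} (hq : q ≠ 0)
    (hrel : A ^ p = B ^ q) (hgen : Subgroup.closure {A, B} = ⊤) (s t : S) : s = t := by
  classical
  by_contra hst
  set φ₁ : FreeGroup S →* Multiplicative ℤ :=
    FreeGroup.lift (fun u => if u = s then Multiplicative.ofAdd (1 : ℤ) else 1) with hφ₁
  set φ₂ : FreeGroup S →* Multiplicative ℤ :=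
    FreeGroup.lift (fun u => if u = t then Multiplicative.ofAdd (1 : ℤ) else 1) with hφ₂
  have hr₁ : p * Multiplicative.toAdd (φ₁ A) = q * Multiplicative.toAdd (φ₁ B) := by
    have h := congrArg (fun z => Multiplicative.toAdd (φ₁ z)) hrel
    simpa using h
  have hr₂ : p * Multiplicative.toAdd (φ₂ A) = q * Multiplicative.toAdd (φ₂ B) := by
    have h := congrArg (fun z => Multiplicative.toAdd (φ₂ z)) hrel
    simpa using h
  set a₁ : ℤ := Multiplicative.toAdd (φ₁ A) with ha₁
  set a₂ : ℤ := Multiplicative.toAdd (φ₂ A) with ha₂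
  set b₁ : ℤ := Multiplicative.toAdd (φ₁ B) with hb₁
  set b₂ : ℤ := Multiplicative.toAdd (φ₂ B) with hb₂
  set ψ : FreeGroup S →* Multiplicative ℤ :=
    MonoidHom.mk' (fun x => φ₁ x ^ a₂ * φ₂ x ^ (-a₁)) (by
      intro x y
      simp only [map_mul, mul_zpow]
      simp [mul_comm, mul_assoc, mul_left_comm]) with hψ
  have toAdd_eq : ∀ x : FreeGroup S,
      Multiplicative.toAdd (ψ x) =
        a₂ * Multiplicative.toAdd (φ₁ x) + (-a₁) * Multiplicative.toAdd (φ₂ x) := by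
    intro x
    simp [hψ, mul_comm]
  have hψA : ψ A = 1 := by
    have h0 : Multiplicative.toAdd (ψ A) = 0 := by rw [toAdd_eq, ← ha₁, ← ha₂]; ring
    simpa using congrArg Multiplicative.ofAdd h0
  have hψB : ψ B = 1 := by
    have h0 : q * (a₂ * b₁ + (-a₁) * b₂) = 0 := by
      have h' : a₂ * (q * b₁) - a₁ * (q * b₂) = a₂ * (p * a₁) - a₁ * (p * a₂) := by
        rw [hr₁, hr₂]
      nlinarith [h']
    have h1 : Multiplicative.toAdd (ψ B) = 0 := by
      rw [toAdd_eq, ← hb₁, ← hb₂]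
      exact (mul_eq_zero.mp h0).resolve_left hq
    simpa using congrArg Multiplicative.ofAdd h1
  have hvan := vanish hgen ψ hψA hψB
  have hφ₁s : Multiplicative.toAdd (φ₁ (FreeGroup.of s)) = 1 := by simp [hφ₁]
  have hφ₂s : Multiplicative.toAdd (φ₂ (FreeGroup.of s)) = 0 := by
    simp [hφ₂, if_neg hst]
  have hφ₁t : Multiplicative.toAdd (φ₁ (FreeGroup.of t)) = 0 := by
    simp [hφ₁, if_neg (Ne.symm hst)]
  have hφ₂t : Multiplicative.toAdd (φ₂ (FreeGroup.of t)) = 1 := by simp [hφ₂]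
  have hs0 : a₂ = 0 := by
    have h := toAdd_eq (FreeGroup.of s)
    rw [hvan (FreeGroup.of s), hφ₁s, hφ₂s] at h
    simpa using h.symm
  have ht0 : a₁ = 0 := by
    have h := toAdd_eq (FreeGroup.of t)
    rw [hvan (FreeGroup.of t), hφ₁t, hφ₂t] at h
    simp at h
    linarith
  have hb₁0 : b₁ = 0 := by
    have h : q * b₁ = 0 := by rw [← hr₁, ht0, mul_zero]
    exact (mul_eq_zero.mp h).resolve_left hq
  have hφ₁A : φ₁ A = 1 := by
    have h : Multiplicative.toAdd (φ₁ A) = 0 := by rw [← ha₁, ht0]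
    simpa using congrArg Multiplicative.ofAdd h
  have hφ₁B : φ₁ B = 1 := by
    have h : Multiplicative.toAdd (φ₁ B) = 0 := by rw [← hb₁, hb₁0]
    simpa using congrArg Multiplicative.ofAdd h
  have h1 := vanish hgen φ₁ hφ₁A hφ₁B (FreeGroup.of s)
  rw [h1] at hφ₁s
  simp at hφ₁s

/-- A free group generated by two elements satisfying a nontrivial power relation is cyclic. -/
lemma key1 {G : Type*} [Group G] [IsFreeGroup G] {A B : G} {p q : ℤ} (hq : q ≠ 0)
    (hrel : A ^ p = B ^ q) (hgen : Subgroup.closure {A, B} = ⊤) :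
    ∃ c : G, ∀ x : G, x ∈ Subgroup.zpowers c := by
  classical
  set e : G ≃* FreeGroup (IsFreeGroup.Generators G) := IsFreeGroup.toFreeGroup G with he
  have hgen' : Subgroup.closure {e A, e B} = ⊤ := by
    have h : Subgroup.map e.toMonoidHom (Subgroup.closure {A, B}) = ⊤ := by
      rw [hgen]
      exact Subgroup.map_top_of_surjective _ e.surjective
    rw [MonoidHom.map_closure] at h
    convert h using 2
    simp [Set.image_insert_eq]
  have hrel' : (e A) ^ p = (e B) ^ q := by rw [← map_zpow, ← map_zpow, hrel]
  have hsub : ∀ s t : IsFreeGroup.Generators G, s = t :=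
    gens_subsingleton hq hrel' hgen'
  rcases isEmpty_or_nonempty (IsFreeGroup.Generators G) with hS | hS
  · refine ⟨1, fun x => ?_⟩
    have hx : e x ∈ Subgroup.closure (Set.range (FreeGroup.of :
        IsFreeGroup.Generators G → FreeGroup (IsFreeGroup.Generators G))) := by
      rw [FreeGroup.closure_range_of]; trivial
    rw [Set.range_eq_empty, Subgroup.closure_empty, Subgroup.mem_bot] at hx
    have hone : x = 1 := by
      have h := congrArg e.symm hx
      simpa using h
    simp [hone]
  · obtain ⟨s₀⟩ := hS
    refine ⟨e.symm (FreeGroup.of s₀), fun x => ?_⟩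
    have hx : e x ∈ Subgroup.closure (Set.range (FreeGroup.of :
        IsFreeGroup.Generators G → FreeGroup (IsFreeGroup.Generators G))) := by
      rw [FreeGroup.closure_range_of]; trivial
    have hsingle : Set.range (FreeGroup.of :
        IsFreeGroup.Generators G → FreeGroup (IsFreeGroup.Generators G)) ⊆ {FreeGroup.of s₀} := by
      rintro _ ⟨s, rfl⟩
      simp [hsub s s₀]
    have hle := (Subgroup.closure_mono hsingle).trans
      (le_of_eq (Subgroup.zpowers_eq_closure (FreeGroup.of s₀)).symm)
    obtain ⟨k, hk⟩ := hle hx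
    refine ⟨k, ?_⟩
    have h := congrArg e.symm hk
    simpa using h

/-- A finite free group is trivial. -/
lemma key2 {G : Type*} [Group G] [IsFreeGroup G] [Finite G] (x : G) : x = 1 := by
  classical
  set e : G ≃* FreeGroup (IsFreeGroup.Generators G) := IsFreeGroup.toFreeGroup G with he
  rcases isEmpty_or_nonempty (IsFreeGroup.Generators G) with hS | hS
  · have hx : e x ∈ Subgroup.closure (Set.range (FreeGroup.of :
        IsFreeGroup.Generators G → FreeGroup (IsFreeGroup.Generators G))) := by
      rw [FreeGroup.closure_range_of]; trivial
    rw [Set.range_eq_empty, Subgroup.closure_empty, Subgroup.mem_bot] at hx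
    have h := congrArg e.symm hx
    simpa using h
  · exfalso
    obtain ⟨s⟩ := hS
    set φ : G →* Multiplicative ℤ := IsFreeGroup.lift (fun _ => Multiplicative.ofAdd (1 : ℤ))
    have hfin : IsOfFinOrder (IsFreeGroup.of (G := G) s) := isOfFinOrder_of_finite _
    have hord : (IsFreeGroup.of (G := G) s) ^ orderOf (IsFreeGroup.of (G := G) s) = 1 :=
      pow_orderOf_eq_one _
    have h := congrArg (fun z => Multiplicative.toAdd (φ z)) hord
    simp only [φ, IsFreeGroup.lift_of, toAdd_ofAdd, map_pow, toAdd_pow, map_one, toAdd_one, nsmul_eq_mul, mul_one, Nat.cast_eq_zero] at h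
    exact hfin.orderOf_pos.ne' h

/-- Free groups are torsion-free. -/
lemma fg_torsionfree {α : Type*} {x : FreeGroup α} {n : ℕ} (hn : n ≠ 0) (h : x ^ n = 1) :
    x = 1 := by
  have hfin : IsOfFinOrder x := isOfFinOrder_iff_pow_eq_one.mpr ⟨n, Nat.pos_of_ne_zero hn, h⟩
  have hfin' : Finite ↥(Subgroup.zpowers x) := hfin.finite_zpowers.to_subtype
  have hx : (⟨x, Subgroup.mem_zpowers x⟩ : ↥(Subgroup.zpowers x)) = 1 := key2 _
  simpa [Subtype.ext_iff] using hx

/-- Two maximal cyclic subgroups of a free group sharing a nontrivial element coincide. -/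
lemma maxcyc_unique {α : Type*} {M₁ M₂ : Subgroup (FreeGroup α)}
    (h₁ : IsMaxCyclicIn ⊤ M₁) (h₂ : IsMaxCyclicIn ⊤ M₂) {z : FreeGroup α} (hz : z ≠ 1)
    (m1 : z ∈ M₁) (m2 : z ∈ M₂) : M₁ = M₂ := by
  obtain ⟨-, ⟨a, rfl⟩, hmax₁⟩ := h₁
  obtain ⟨-, ⟨b, rfl⟩, hmax₂⟩ := h₂
  obtain ⟨p, hp⟩ := m1
  obtain ⟨q, hq⟩ := m2
  have hq0 : q ≠ 0 := by rintro rfl; simp at hq; exact hz hq.symm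
  set H : Subgroup (FreeGroup α) := Subgroup.closure {a, b} with hH
  have haH : a ∈ H := Subgroup.subset_closure (by simp)
  have hbH : b ∈ H := Subgroup.subset_closure (by simp)
  set A : ↥H := ⟨a, haH⟩
  set B : ↥H := ⟨b, hbH⟩
  have hgen : Subgroup.closure {A, B} = ⊤ := by
    have h := Subgroup.closure_preimage_eq_top ({a, b} : Set (FreeGroup α))
    have hset : (Subgroup.closure ({a, b} : Set (FreeGroup α))).subtype ⁻¹' {a, b}
        = ({A, B} : Set ↥H) := by
      ext ⟨y, hy⟩
      simp [Subgroup.coe_subtype, A, B, Subtype.ext_iff]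
    rw [hset] at h
    exact h
  have hrel : A ^ p = B ^ q := by
    apply Subtype.ext
    push_cast
    exact hp.trans hq.symm
  obtain ⟨c, hc⟩ := key1 hq0 hrel hgen
  obtain ⟨k, hk⟩ := hc A
  obtain ⟨l, hl⟩ := hc B
  have hak : a ∈ Subgroup.zpowers (c : FreeGroup α) := by
    refine ⟨k, ?_⟩
    show (c : FreeGroup α) ^ k = a
    have h := congrArg Subtype.val hk
    simpa [A] using h
  have hbl : b ∈ Subgroup.zpowers (c : FreeGroup α) := by
    refine ⟨l, ?_⟩
    show (c : FreeGroup α) ^ l = b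
    have h := congrArg Subtype.val hl
    simpa [B] using h
  have e₁ := hmax₁ (Subgroup.zpowers (c : FreeGroup α)) le_top ⟨c, rfl⟩
    (Subgroup.zpowers_le.mpr hak)
  have e₂ := hmax₂ (Subgroup.zpowers (c : FreeGroup α)) le_top ⟨c, rfl⟩
    (Subgroup.zpowers_le.mpr hbl)
  rw [e₁, e₂]

end FreeGroupLemmas

/-- The relation `≤` on subgroups of a free group `F` equipped with compatible
peripheral structures is a preorder: reflexive and transitive. -/
theorem stmt_2 {α : Type*} (W : Set (Subgroup (FreeGroup α)))
    (hW : IsPeripheralStructure ⊤ W) :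
    Reflexive (ple (G := FreeGroup α) (W := W)) ∧
    Transitive (ple (G := FreeGroup α) (W := W)) := by
  constructor
  · intro P
    exact ⟨by simp [Subgroup.relIndex_self], fun _ => subset_rfl⟩
  · intro P Q R hPQ hQR
    obtain ⟨h1, h2⟩ := hPQ
    obtain ⟨h3, h4⟩ := hQR
    refine ⟨Subgroup.relIndex_ne_zero_trans h3 h1, ?_⟩
    intro h5
    have hPQ' : P.H.relIndex Q.H ≠ 0 := Subgroup.relIndex_ne_zero_trans h5 h3
    have hQR' : Q.H.relIndex R.H ≠ 0 := Subgroup.relIndex_ne_zero_trans h1 h5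
    have s2 := h2 hPQ'
    have s4 := h4 hQR'
    rintro D ⟨hDbot, C, hC, g, hgP, hDeq⟩
    obtain ⟨⟨x, hxD⟩, hxne⟩ := Subgroup.ne_bot_iff_exists_ne_one.mp hDbot
    have hx1 : x ≠ 1 := fun h => hxne (Subtype.ext h)
    rw [hDeq, Subgroup.mem_inf, Subgroup.mem_inf] at hxD
    obtain ⟨⟨hxP, hxR⟩, hxC⟩ := hxD
    obtain ⟨n, hnpos, -, hxnQ⟩ := Subgroup.exists_pow_mem_of_relIndex_ne_zero h1 hxP
    set y := x ^ n with hy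
    have hy1 : y ≠ 1 := fun h => hx1 (fg_torsionfree hnpos.ne' h)
    have hyP : y ∈ P.H := pow_mem hxP n
    have hyR : y ∈ R.H := pow_mem hxR n
    have hyQ : y ∈ Q.H := hxnQ.1
    have hyC : y ∈ conjSub g C := pow_mem hxC n
    have hD₁mem : (P.H ⊓ Q.H) ⊓ conjSub g C ∈ pullbackStruct P.H P.U (P.H ⊓ Q.H) := by
      refine ⟨?_, C, hC, g, hgP, rfl⟩
      intro hb
      apply hy1
      have hmem : y ∈ ((P.H ⊓ Q.H) ⊓ conjSub g C) := ⟨⟨hyP, hyQ⟩, hyC⟩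
      rw [hb] at hmem
      exact Subgroup.mem_bot.mp hmem
    obtain ⟨hD₁bot, C₁, hC₁, g₁, hg₁Q, hD₁eq⟩ := s2 hD₁mem
    have hyC₁ : y ∈ conjSub g₁ C₁ := by
      have hmem : y ∈ (P.H ⊓ Q.H) ⊓ conjSub g₁ C₁ := by
        rw [← hD₁eq]; exact ⟨⟨hyP, hyQ⟩, hyC⟩
      exact hmem.2
    have hD₂mem : (Q.H ⊓ R.H) ⊓ conjSub g₁ C₁ ∈ pullbackStruct Q.H Q.U (Q.H ⊓ R.H) := by
      refine ⟨?_, C₁, hC₁, g₁, hg₁Q, rfl⟩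
      intro hb
      apply hy1
      have hmem : y ∈ ((Q.H ⊓ R.H) ⊓ conjSub g₁ C₁) := ⟨⟨hyQ, hyR⟩, hyC₁⟩
      rw [hb] at hmem
      exact Subgroup.mem_bot.mp hmem
    obtain ⟨hD₂bot, C₂, hC₂, g₂, hg₂R, hD₂eq⟩ := s4 hD₂mem
    have hyC₂ : y ∈ conjSub g₂ C₂ := by
      have hmem : y ∈ (Q.H ⊓ R.H) ⊓ conjSub g₂ C₂ := by
        rw [← hD₂eq]; exact ⟨⟨hyQ, hyR⟩, hyC₁⟩
      exact hmem.2
    obtain ⟨-, C₀, hC₀W, h, -, hCeq⟩ := P.compat hC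
    obtain ⟨-, C₀₂, hC₀₂W, h₂, -, hC₂eq⟩ := R.compat hC₂
    have hgCeq : conjSub g C = P.H ⊓ conjSub (g * h) C₀ := by
      rw [hCeq, conjSub_inf, conjSub_self hgP, conjSub_conjSub]
    have hgC₂eq : conjSub g₂ C₂ = R.H ⊓ conjSub (g₂ * h₂) C₀₂ := by
      rw [hC₂eq, conjSub_inf, conjSub_self hg₂R, conjSub_conjSub]
    have hM₁ : IsMaxCyclicIn ⊤ (conjSub (g * h) C₀) := conjSub_maxCyclic (hW.1 C₀ hC₀W)
    have hM₂ : IsMaxCyclicIn ⊤ (conjSub (g₂ * h₂) C₀₂) := conjSub_maxCyclic (hW.1 C₀₂ hC₀₂W)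
    have hyM₁ : y ∈ conjSub (g * h) C₀ := by rw [hgCeq] at hyC; exact hyC.2
    have hyM₂ : y ∈ conjSub (g₂ * h₂) C₀₂ := by rw [hgC₂eq] at hyC₂; exact hyC₂.2
    have hMeq := maxcyc_unique hM₁ hM₂ hy1 hyM₁ hyM₂
    refine ⟨hDbot, C₂, hC₂, g₂, hg₂R, ?_⟩
    rw [hDeq, hgCeq, hgC₂eq, hMeq]
    ext w
    simp only [Subgroup.mem_inf]
    tauto
end

section
/- Let F be a free group and g ∈ F nontrivial. Then the centralizer of g in F is infinite cyclic. -/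
open FreeGroup

/-- The exponent-sum homomorphism at a letter `c`. -/
noncomputable def expHom {ι : Type*} (c : ι) : FreeGroup ι →* Multiplicative ℤ :=
  letI := Classical.decEq ι
  FreeGroup.lift (fun x => if x = c then Multiplicative.ofAdd (1 : ℤ) else 1)

lemma expHom_of_self {ι : Type*} (c : ι) :
    expHom c (FreeGroup.of c) = Multiplicative.ofAdd (1 : ℤ) := by
  simp [expHom]

lemma expHom_of_ne {ι : Type*} {x c : ι} (h : x ≠ c) :
    expHom c (FreeGroup.of x) = 1 := by
  simp [expHom, h]

/-- Distinct generators of a free group do not commute. -/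
lemma eq_of_of_mul_comm {ι : Type*} {x y : ι}
    (h : FreeGroup.of x * FreeGroup.of y = FreeGroup.of y * FreeGroup.of x) : x = y := by
  classical
  by_contra hxy
  let f : ι → Equiv.Perm (Fin 3) := fun c =>
    if c = x then Equiv.swap 0 1 else if c = y then Equiv.swap 0 2 else 1
  have h2 : Equiv.swap 0 1 * Equiv.swap 0 2 = Equiv.swap 0 2 * Equiv.swap (0 : Fin 3) 1 := by
    have h2 := congrArg (FreeGroup.lift f) h
    rw [_root_.map_mul, _root_.map_mul, FreeGroup.lift_apply_of, FreeGroup.lift_apply_of] at h2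
    simpa [f, hxy, Ne.symm hxy] using h2
  exact absurd h2 (by decide)

/-- The free group on a one-element type is `Multiplicative ℤ`. -/
noncomputable def freeGroupUniqueMulEquiv (σ : Type*) [Unique σ] :
    FreeGroup σ ≃* Multiplicative ℤ := by
  refine MonoidHom.toMulEquiv
    (FreeGroup.lift (fun _ => Multiplicative.ofAdd (1 : ℤ)))
    (zpowersHom _ (FreeGroup.of (default : σ))) ?_ ?_
  · apply FreeGroup.ext_hom
    intro a
    simp [Subsingleton.elim a default]
  · apply MonoidHom.ext_mint
    simp

/-- A commutative free group is cyclic. -/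
lemma isCyclic_of_isFreeGroup_comm {G : Type*} [Group G] [IsFreeGroup G]
    (hcomm : ∀ x y : G, x * y = y * x) : IsCyclic G := by
  obtain ⟨ι, ⟨b⟩⟩ := IsFreeGroup.nonempty_basis (G := G)
  have hsub : Subsingleton ι := by
    constructor
    intro x y
    apply eq_of_of_mul_comm (ι := ι)
    have h := hcomm (b.repr.symm (FreeGroup.of x)) (b.repr.symm (FreeGroup.of y))
    have := congrArg b.repr h
    simpa using this
  rcases isEmpty_or_nonempty ι with h | h
  · have : Subsingleton G := b.repr.toEquiv.subsingleton
    exact ⟨⟨1, fun x => ⟨0, by simp [Subsingleton.elim x 1]⟩⟩⟩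
  · haveI : Unique ι := uniqueOfSubsingleton h.some
    have e : G ≃* Multiplicative ℤ := b.repr.trans (freeGroupUniqueMulEquiv ι)
    exact isCyclic_of_surjective e.symm e.symm.surjective

/-- An element commuting with a generator of a free group is a power of that generator. -/
lemma exists_zpow_of_commute_of {ι : Type*} {z : FreeGroup ι} {a : ι}
    (h : z * FreeGroup.of a = FreeGroup.of a * z) :
    ∃ n : ℤ, z = FreeGroup.of a ^ n := by
  classical
  set k : Set (FreeGroup ι) := {z, FreeGroup.of a} with hk
  have hcomm : ∀ x ∈ k, ∀ y ∈ k, x * y = y * x := by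
    rintro x (rfl | rfl) y (rfl | rfl) <;> simp_all
  letI : CommGroup (Subgroup.closure k) := Subgroup.closureCommGroupOfComm hcomm
  haveI : IsCyclic (Subgroup.closure k) :=
    isCyclic_of_isFreeGroup_comm (fun x y => mul_comm x y)
  obtain ⟨t, ht⟩ := IsCyclic.exists_generator (α := Subgroup.closure k)
  have hz : z ∈ Subgroup.closure k := Subgroup.subset_closure (by simp [hk])
  have ha : FreeGroup.of a ∈ Subgroup.closure k := Subgroup.subset_closure (by simp [hk])
  obtain ⟨m, hm⟩ := (Subgroup.mem_zpowers_iff).mp (ht ⟨z, hz⟩)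
  obtain ⟨n, hn⟩ := (Subgroup.mem_zpowers_iff).mp (ht ⟨FreeGroup.of a, ha⟩)
  have hm' : (t : FreeGroup ι) ^ m = z := by
    have := congrArg (Subtype.val) hm
    simpa using this
  have hn' : (t : FreeGroup ι) ^ n = FreeGroup.of a := by
    have := congrArg (Subtype.val) hn
    simpa using this
  -- exponent count at `a`:
  have hcount : (Multiplicative.toAdd (expHom a (t : FreeGroup ι))) * n = 1 := by
    have := congrArg (expHom a) hn'
    rw [map_zpow, expHom_of_self] at this
    have := congrArg Multiplicative.toAdd this
    simpa [mul_comm] using this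
  have hunit : IsUnit n :=
    IsUnit.of_mul_eq_one (a := n) _ ((mul_comm n _).trans hcount)
  rcases Int.isUnit_iff.mp hunit with rfl | rfl
  · refine ⟨m, ?_⟩
    rw [← hm', ← hn']
    simp
  · refine ⟨-m, ?_⟩
    rw [← hm', ← hn']
    rw [← zpow_mul]
    norm_num

/-- Let `F` be a free group and `g ∈ F` nontrivial.  Then the centralizer of `g`
in `F` is infinite cyclic. -/
theorem stmt_7 {α : Type*} (g : FreeGroup α) (hg : g ≠ 1) :
    Nonempty (Subgroup.centralizer ({g} : Set (FreeGroup α)) ≃* Multiplicative ℤ) := by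
  classical
  set C := Subgroup.centralizer ({g} : Set (FreeGroup α)) with hC
  have hgC : g ∈ C := Subgroup.mem_centralizer_iff.mpr (by simp)
  obtain ⟨ι, ⟨b⟩⟩ := IsFreeGroup.nonempty_basis (G := C)
  set z : FreeGroup ι := b.repr ⟨g, hgC⟩ with hz
  have hz1 : z ≠ 1 := by
    intro h
    apply hg
    have h3 : (⟨g, hgC⟩ : C) = 1 := by
      apply b.repr.injective
      rw [_root_.map_one, ← hz]
      exact h
    simpa using congrArg Subtype.val h3
  have hcentral : ∀ w : FreeGroup ι, z * w = w * z := by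
    intro w
    have hw : (b.repr.symm w : FreeGroup α) ∈ C := (b.repr.symm w).2
    have := Subgroup.mem_centralizer_iff.mp hw g (by simp)
    -- this : g * (b.repr.symm w) = (b.repr.symm w) * g
    have h2 : (⟨g, hgC⟩ : C) * b.repr.symm w = b.repr.symm w * ⟨g, hgC⟩ :=
      Subtype.ext this
    have := congrArg b.repr h2
    simpa [hz] using this
  have hsub : Subsingleton ι := by
    constructor
    intro i j
    by_contra hij
    obtain ⟨p, hp⟩ := exists_zpow_of_commute_of (hcentral (FreeGroup.of i))
    obtain ⟨q, hq⟩ := exists_zpow_of_commute_of (hcentral (FreeGroup.of j))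
    have h1 : expHom j z = 1 := by
      rw [hp, map_zpow, expHom_of_ne hij]
      simp
    have h2 : expHom j z = Multiplicative.ofAdd q := by
      rw [hq, map_zpow, expHom_of_self, ← ofAdd_zsmul, smul_eq_mul, mul_one]
    rw [h2] at h1
    have : q = 0 := by
      have := congrArg Multiplicative.toAdd h1
      simpa using this
    apply hz1
    rw [hq, this, zpow_zero]
  have hne : Nonempty ι := by
    by_contra h
    haveI : IsEmpty ι := not_nonempty_iff.mp h
    exact hz1 (Subsingleton.elim z 1)
  haveI : Unique ι := uniqueOfSubsingleton hne.some
  exact ⟨b.repr.trans (freeGroupUniqueMulEquiv ι)⟩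
end

section
/- Let F₂ = ⟨x, y⟩ be the free group of rank 2. Let F₃ = ⟨a, b, c⟩ embed in F₂ via a ↦ x, b ↦ yxy⁻¹, c ↦ y²xy⁻². Then F₂ is an HNN extension of F₃ with stable letter y conjugating ⟨a, b⟩ to ⟨b, c⟩; yet F₃ admits no free product decomposition F₃ = P * Q with P, Q nontrivial such that ⟨a,b⟩ is conjugate into P or Q and ⟨b,c⟩ is conjugate into P or Q. -/
namespace Stmt12

/-- `F₃ = ⟨a, b, c⟩`. -/
abbrev F₃ := FreeGroup (Fin 3)
/-- `F₂ = ⟨x, y⟩`. -/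
abbrev F₂ := FreeGroup Bool

noncomputable def a : F₃ := FreeGroup.of 0
noncomputable def b : F₃ := FreeGroup.of 1
noncomputable def c : F₃ := FreeGroup.of 2
noncomputable def x : F₂ := FreeGroup.of false
noncomputable def y : F₂ := FreeGroup.of true

/-- `A = ⟨a, b⟩ ≤ F₃`. -/
noncomputable def A : Subgroup F₃ := Subgroup.closure {a, b}
/-- `B = ⟨b, c⟩ ≤ F₃`. -/
noncomputable def B : Subgroup F₃ := Subgroup.closure {b, c}

theorem ha : a ∈ A := Subgroup.subset_closure (by simp)
theorem hb : b ∈ A := Subgroup.subset_closure (by simp)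

noncomputable def θ : F₃ ≃* F₃ := FreeGroup.freeGroupCongr (finRotate 3)

theorem θa : θ a = b := by simp [θ, a, b]
theorem θb : θ b = c := by simp [θ, b, c]

theorem mapA : A.map θ.toMonoidHom = B := by
  rw [A, MonoidHom.map_closure, Set.image_insert_eq, Set.image_singleton]
  simp only [MulEquiv.coe_toMonoidHom, θa, θb, B]

noncomputable def φ : A ≃* B := (θ.subgroupMap A).trans (MulEquiv.subgroupCongr mapA)

theorem φ_coe (u : F₃) (hu : u ∈ A) : (φ ⟨u, hu⟩ : F₃) = θ u := rfl

noncomputable def f : F₃ →* F₂ := FreeGroup.lift ![x, y*x*y⁻¹, y*y*x*y⁻¹*y⁻¹]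

theorem fa : f a = x := by simp [f, a]
theorem fb : f b = y*x*y⁻¹ := by simp [f, b]
theorem fc : f c = y*y*x*y⁻¹*y⁻¹ := by simp [f, c]

theorem hx : ∀ u : A, y * f ↑u = f (φ u : F₃) * y := by
  intro ⟨u, hu⟩
  rw [φ_coe]
  have h : Set.EqOn (⇑((MulAut.conj y).toMonoidHom.comp f)) (⇑(f.comp θ.toMonoidHom))
      (A : Set F₃) := by
    apply MonoidHom.eqOn_closure
    rintro z (rfl | rfl) <;>
      simp only [MonoidHom.coe_comp, Function.comp_apply, MulEquiv.coe_toMonoidHom,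
        MulAut.conj_apply, θa, θb, fa, fb, fc]
    group
  have h2 := h hu
  simp only [MonoidHom.coe_comp, Function.comp_apply, MulEquiv.coe_toMonoidHom,
    MulAut.conj_apply] at h2
  rw [← h2]
  group

noncomputable def ψ₀ : HNNExtension F₃ A B φ →* F₂ := HNNExtension.lift f y hx

noncomputable def χ : F₂ →* HNNExtension F₃ A B φ :=
  FreeGroup.lift (fun i => match i with
    | false => HNNExtension.of a
    | true => HNNExtension.t)

theorem χx : χ x = HNNExtension.of a := by simp [χ, x]
theorem χy : χ y = HNNExtension.t := by simp [χ, y]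

theorem χψ : χ.comp ψ₀ = MonoidHom.id _ := by
  have h1 : (HNNExtension.of b : HNNExtension F₃ A B φ) =
      HNNExtension.t * HNNExtension.of a * HNNExtension.t⁻¹ := by
    have := HNNExtension.equiv_eq_conj (φ := φ) ⟨a, ha⟩
    rwa [φ_coe, θa] at this
  have h2 : (HNNExtension.of c : HNNExtension F₃ A B φ) =
      HNNExtension.t * HNNExtension.of b * HNNExtension.t⁻¹ := by
    have := HNNExtension.equiv_eq_conj (φ := φ) ⟨b, hb⟩
    rwa [φ_coe, θb] at this
  apply HNNExtension.hom_ext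
  · apply FreeGroup.ext_hom
    intro i
    fin_cases i
    · show χ (ψ₀ (HNNExtension.of a)) = HNNExtension.of a
      rw [show ψ₀ (HNNExtension.of a) = x from by rw [ψ₀, HNNExtension.lift_of, fa], χx]
    · show χ (ψ₀ (HNNExtension.of b)) = HNNExtension.of b
      rw [show ψ₀ (HNNExtension.of b) = y*x*y⁻¹ from by rw [ψ₀, HNNExtension.lift_of, fb], h1]
      simp only [map_mul, map_inv, χx, χy]
    · show χ (ψ₀ (HNNExtension.of c)) = HNNExtension.of c
      rw [show ψ₀ (HNNExtension.of c) = y*y*x*y⁻¹*y⁻¹ from by rw [ψ₀, HNNExtension.lift_of, fc],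
        h2, h1]
      simp only [map_mul, map_inv, χx, χy]
      group
  · show χ (ψ₀ HNNExtension.t) = HNNExtension.t
    rw [show ψ₀ HNNExtension.t = y from by rw [ψ₀, HNNExtension.lift_t], χy]

theorem ψχ : ψ₀.comp χ = MonoidHom.id _ := by
  apply FreeGroup.ext_hom
  intro i
  cases i
  · show ψ₀ (χ x) = x
    rw [χx, ψ₀, HNNExtension.lift_of, fa]
  · show ψ₀ (χ y) = y
    rw [χy, ψ₀, HNNExtension.lift_t]

noncomputable def ψ : HNNExtension F₃ A B φ ≃* F₂ := MonoidHom.toMulEquiv ψ₀ χ χψ ψχ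

theorem part1 : ((φ ⟨a, ha⟩ : F₃) = b) ∧ ((φ ⟨b, hb⟩ : F₃) = c) ∧
    ψ (HNNExtension.of a) = x ∧ ψ (HNNExtension.of b) = y * x * y⁻¹ ∧
    ψ (HNNExtension.of c) = y * y * x * y⁻¹ * y⁻¹ ∧ ψ HNNExtension.t = y := by
  have hψ : ∀ z, ψ z = ψ₀ z := fun z => rfl
  refine ⟨by rw [φ_coe, θa], by rw [φ_coe, θb], ?_, ?_, ?_, ?_⟩ <;> rw [hψ]
  · rw [ψ₀, HNNExtension.lift_of, fa]
  · rw [ψ₀, HNNExtension.lift_of, fb]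
  · rw [ψ₀, HNNExtension.lift_of, fc]
  · rw [ψ₀, HNNExtension.lift_t]


theorem hbB : b ∈ B := Subgroup.subset_closure (by simp)
theorem hcB : c ∈ B := Subgroup.subset_closure (by simp)

theorem conj_mem {g u : F₃} {C : Subgroup F₃} {P : Subgroup F₃} (hle : conjSub g C ≤ P)
    (hu : u ∈ C) : g * u * g⁻¹ ∈ P := by
  apply hle
  exact ⟨u, hu, by simp [MulAut.conj_apply]⟩

/-- A hom killing conjugates of `a, b, c` is trivial at `a,b,c` hence trivial. -/
theorem conj_one {M : Type*} [Group M] (r : F₃ →* M) {g u : F₃} (h : r (g * u * g⁻¹) = 1) :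
    r u = 1 := by
  have h2 : r g * r u * (r g)⁻¹ = 1 := by simpa using h
  have := congrArg (fun z => (r g)⁻¹ * z * r g) h2
  simpa [mul_assoc] using this

-- exponent sum of generator 1
noncomputable def s : F₃ →* Multiplicative ℤ :=
  FreeGroup.lift (fun i => if i = 1 then Multiplicative.ofAdd 1 else 1)

theorem s_b : s b = Multiplicative.ofAdd 1 := by simp [s, b]

section NoSplit

variable {P Q : Subgroup F₃}
  (hinj : Function.Injective (Monoid.Coprod.lift P.subtype Q.subtype))
  (hsup : P ⊔ Q = ⊤)

include hinj hsup

-- L is bijective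
theorem Lbij : Function.Bijective (Monoid.Coprod.lift P.subtype Q.subtype) := by
  refine ⟨hinj, ?_⟩
  rw [← MonoidHom.range_eq_top, eq_top_iff, ← hsup, sup_le_iff]
  constructor
  · rintro p hp
    exact ⟨Monoid.Coprod.inl ⟨p, hp⟩, by simp⟩
  · rintro q hq
    exact ⟨Monoid.Coprod.inr ⟨q, hq⟩, by simp⟩

noncomputable def E : (Monoid.Coprod ↥P ↥Q) ≃* F₃ :=
  MulEquiv.ofBijective _ (Lbij hinj hsup)

theorem E_inl (p : P) : E hinj hsup (Monoid.Coprod.inl p) = (p : F₃) := by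
  show Monoid.Coprod.lift P.subtype Q.subtype (Monoid.Coprod.inl p) = (p : F₃)
  simp

theorem E_inr (q : Q) : E hinj hsup (Monoid.Coprod.inr q) = (q : F₃) := by
  show Monoid.Coprod.lift P.subtype Q.subtype (Monoid.Coprod.inr q) = (q : F₃)
  simp

theorem Esymm_mem_P {p : F₃} (hp : p ∈ P) :
    (E hinj hsup).symm p = Monoid.Coprod.inl (⟨p, hp⟩ : P) := by
  rw [MulEquiv.symm_apply_eq, E_inl]

theorem Esymm_mem_Q {q : F₃} (hq : q ∈ Q) :
    (E hinj hsup).symm q = Monoid.Coprod.inr (⟨q, hq⟩ : Q) := by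
  rw [MulEquiv.symm_apply_eq, E_inr]

-- retraction case : both conjugates in P
theorem caseP (hQ : Q ≠ ⊥) {g h : F₃} (hgA : conjSub g A ≤ P) (hhB : conjSub h B ≤ P) :
    False := by
  set r : F₃ →* F₃ :=
    (Monoid.Coprod.lift (1 : P →* F₃) Q.subtype).comp (E hinj hsup).symm.toMonoidHom with hr
  have hrP : ∀ p ∈ P, r p = 1 := by
    intro p hp
    simp [hr, Esymm_mem_P hinj hsup hp]
  have hrQ : ∀ q ∈ Q, r q = q := by
    intro q hq
    simp [hr, Esymm_mem_Q hinj hsup hq]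
  have hra : r a = 1 := conj_one r (hrP _ (conj_mem hgA ha))
  have hrb : r b = 1 := conj_one r (hrP _ (conj_mem hgA hb))
  have hrc : r c = 1 := conj_one r (hrP _ (conj_mem hhB hcB))
  have hr1 : r = 1 := by
    apply FreeGroup.ext_hom
    intro i
    fin_cases i
    exacts [hra, hrb, hrc]
  obtain ⟨q, hq, hq1⟩ := (Subgroup.bot_or_exists_ne_one Q).resolve_left hQ
  exact hq1 (by rw [← hrQ q hq, hr1]; rfl)

theorem caseQ (hP : P ≠ ⊥) {g h : F₃} (hgA : conjSub g A ≤ Q) (hhB : conjSub h B ≤ Q) :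
    False := by
  set r : F₃ →* F₃ :=
    (Monoid.Coprod.lift P.subtype (1 : Q →* F₃)).comp (E hinj hsup).symm.toMonoidHom with hr
  have hrQ : ∀ p ∈ Q, r p = 1 := by
    intro p hp
    simp [hr, Esymm_mem_Q hinj hsup hp]
  have hrP : ∀ q ∈ P, r q = q := by
    intro q hq
    simp [hr, Esymm_mem_P hinj hsup hq]
  have hra : r a = 1 := conj_one r (hrQ _ (conj_mem hgA ha))
  have hrb : r b = 1 := conj_one r (hrQ _ (conj_mem hgA hb))
  have hrc : r c = 1 := conj_one r (hrQ _ (conj_mem hhB hcB))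
  have hr1 : r = 1 := by
    apply FreeGroup.ext_hom
    intro i
    fin_cases i
    exacts [hra, hrb, hrc]
  obtain ⟨q, hq, hq1⟩ := (Subgroup.bot_or_exists_ne_one P).resolve_left hP
  exact hq1 (by rw [← hrP q hq, hr1]; rfl)

-- mixed case
theorem caseMixed {g h : F₃} (hgb : g * b * g⁻¹ ∈ P) (hhb : h * b * h⁻¹ ∈ Q) : False := by
  set ρ : (Monoid.Coprod ↥P ↥Q) →* Abelianization P × Abelianization Q :=
    Monoid.Coprod.lift ((MonoidHom.inl _ _).comp Abelianization.of)
      ((MonoidHom.inr _ _).comp Abelianization.of) with hρ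
  set τ : F₃ →* Abelianization P × Abelianization Q :=
    ρ.comp (E hinj hsup).symm.toMonoidHom with hτ
  -- second component kills P, first component kills Q
  have hτ2 : ((MonoidHom.snd _ _).comp τ) b = 1 := by
    apply conj_one (g := g)
    simp [hτ, Esymm_mem_P hinj hsup hgb, hρ]
  have hτ1 : ((MonoidHom.fst _ _).comp τ) b = 1 := by
    apply conj_one (g := h)
    simp [hτ, Esymm_mem_Q hinj hsup hhb, hρ]
  have hτb : τ b = 1 := by
    ext
    · exact hτ1
    · exact hτ2
  -- factor s through τ
  set G2 : Abelianization P × Abelianization Q →* Multiplicative ℤ :=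
    ((Abelianization.lift (s.comp P.subtype)).comp (MonoidHom.fst _ _)) *
      ((Abelianization.lift (s.comp Q.subtype)).comp (MonoidHom.snd _ _)) with hG2
  have key : G2.comp τ = s := by
    have : (G2.comp ρ) = s.comp (E hinj hsup).toMonoidHom := by
      apply Monoid.Coprod.hom_ext <;> ext z <;>
        simp [hG2, hρ, E_inl hinj hsup, E_inr hinj hsup]
    rw [hτ, ← MonoidHom.comp_assoc, this, MonoidHom.comp_assoc]
    ext z
    simp
  have : s b = 1 := by rw [← key]; simp [hτb]
  rw [s_b] at this
  exact absurd this (by decide)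


end NoSplit

/- `F₂` is an HNN extension of `F₃ = ⟨a,b,c⟩` with stable letter `y` conjugating
`⟨a, b⟩` to `⟨b, c⟩`, via the embedding `a ↦ x`, `b ↦ yxy⁻¹`, `c ↦ y²xy⁻²`; yet `F₃`
admits no free decomposition `F₃ = P * Q` with `P, Q` nontrivial such that `⟨a,b⟩` is
conjugate into a factor and `⟨b,c⟩` is conjugate into a factor. -/
theorem stmt_12 :
    (∃ φ : A ≃* B, ((φ ⟨a, ha⟩ : F₃) = b) ∧ ((φ ⟨b, hb⟩ : F₃) = c) ∧
      ∃ ψ : HNNExtension F₃ A B φ ≃* F₂,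
        ψ (HNNExtension.of a) = x ∧
        ψ (HNNExtension.of b) = y * x * y⁻¹ ∧
        ψ (HNNExtension.of c) = y * y * x * y⁻¹ * y⁻¹ ∧
        ψ HNNExtension.t = y) ∧
    ¬ ∃ P Q : Subgroup F₃, P ≠ ⊥ ∧ Q ≠ ⊥ ∧
        Function.Injective (Monoid.Coprod.lift P.subtype Q.subtype) ∧ P ⊔ Q = ⊤ ∧
        (∃ g : F₃, conjSub g A ≤ P ∨ conjSub g A ≤ Q) ∧
        (∃ g : F₃, conjSub g B ≤ P ∨ conjSub g B ≤ Q) := by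
  constructor
  · exact ⟨φ, part1.1, part1.2.1, ψ, part1.2.2.1, part1.2.2.2.1, part1.2.2.2.2.1,
      part1.2.2.2.2.2⟩
  · rintro ⟨P, Q, hP, hQ, hinj, hsup, ⟨g, hgA | hgA⟩, ⟨h, hhB | hhB⟩⟩
    · exact caseP hinj hsup hQ hgA hhB
    · exact caseMixed hinj hsup (conj_mem hgA hb) (conj_mem hhB hbB)
    · exact caseMixed hinj hsup (conj_mem hhB hbB) (conj_mem hgA hb)
    · exact caseQ hinj hsup hP hgA hhB

end Stmt12
end
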